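/- For every positive integer n and every even positive integer d, the automaton S_{n,d} rejects all words in LimsupOdd_{n,d}: for every infinite word w over Σ_{n,d} in which the largest priority occurring infinitely often is odd, every run of S_{n,d} reading w eventually reaches the rejecting state rej. -/

import Mathlib

namespace PGSep

/-- Letters of the alphabet `Σ_{n,d}`: triples (source node, priority, target node). -/
abbrev Letter : Type := ℕ × ℕ × ℕ

/-- The priority component of a letter. -/
def prio (e : Letter) : ℕ := e.2.1

/-- Membership in the alphabet `Σ_{n,d} = {1,…,n} × {1,…,d} × {1,…,n}`. -/
def InAlph (n d : ℕ) (e : Letter) : Prop :=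
  1 ≤ e.1 ∧ e.1 ≤ n ∧ 1 ≤ e.2.1 ∧ e.2.1 ≤ d ∧ 1 ≤ e.2.2 ∧ e.2.2 ≤ n

/-- Infinite words over the alphabet. -/
abbrev Word : Type := ℕ → Letter

/-- `p` occurs infinitely often among the values of `f`. -/
def InfOft (f : ℕ → ℕ) (p : ℕ) : Prop := ∀ N, ∃ k, N ≤ k ∧ f k = p

/-- The largest value occurring infinitely often in `f` exists and is even. -/
def MaxInfOftEven (f : ℕ → ℕ) : Prop :=
  ∃ p, Even p ∧ InfOft f p ∧ ∀ q, InfOft f q → q ≤ p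

/-- The largest value occurring infinitely often in `f` exists and is odd. -/
def MaxInfOftOdd (f : ℕ → ℕ) : Prop :=
  ∃ p, Odd p ∧ InfOft f p ∧ ∀ q, InfOft f q → q ≤ p

/-- `LimsupEven_{n,d}`: the largest priority occurring infinitely often is even. -/
def LimsupEven (w : Word) : Prop := MaxInfOftEven fun k => prio (w k)

/-- `LimsupOdd_{n,d}`: the largest priority occurring infinitely often is odd. -/
def LimsupOdd (w : Word) : Prop := MaxInfOftOdd fun k => prio (w k)

/-- An infinite sequence of triples is a path in the edge set `E`. -/
def IsPathSeq {V : Type*} (E : Set (V × ℕ × V)) (w : ℕ → V × ℕ × V) : Prop :=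
  ∀ k, w k ∈ E ∧ (w k).2.2 = (w (k + 1)).1

/-- A game graph with `n` nodes (the set {1,…,n}) and priorities up to `d`. -/
structure GameGraph (n d : ℕ) where
  /-- nodes owned by Even (V_□) -/
  evenN : Set ℕ
  /-- nodes owned by Odd (V_△) -/
  oddN : Set ℕ
  /-- the starting node -/
  start : ℕ
  /-- the set of edges (a subset of the alphabet) -/
  edges : Set Letter
  union_eq : evenN ∪ oddN = Set.Icc 1 n
  disj : Disjoint evenN oddN
  start_mem : start ∈ Set.Icc 1 n
  edges_alph : ∀ e ∈ edges, InAlph n d e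
  total : ∀ v ∈ Set.Icc (1 : ℕ) n, ∃ e ∈ edges, e.1 = v

/-- A play in a game graph: an infinite path starting at the starting node,
identified with the word listing its consecutive edges. -/
def IsPlay {n d : ℕ} (G : GameGraph n d) (w : Word) : Prop :=
  (w 0).1 = G.start ∧ IsPathSeq G.edges w

/-- A positional strategy for Even: one outgoing edge for each node of `V_□`. -/
structure EPosStrat {n d : ℕ} (G : GameGraph n d) where
  choice : ℕ → Letter
  mem : ∀ v ∈ G.evenN, choice v ∈ G.edges ∧ (choice v).1 = v

/-- A positional strategy for Odd: one outgoing edge for each node of `V_△`. -/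
structure OPosStrat {n d : ℕ} (G : GameGraph n d) where
  choice : ℕ → Letter
  mem : ∀ v ∈ G.oddN, choice v ∈ G.edges ∧ (choice v).1 = v

/-- A play arises from a positional strategy of Even. -/
def ArisesE {n d : ℕ} {G : GameGraph n d} (τ : EPosStrat G) (w : Word) : Prop :=
  IsPlay G w ∧ ∀ k, (w k).1 ∈ G.evenN → w k = τ.choice (w k).1

/-- A play arises from a positional strategy of Odd. -/
def ArisesO {n d : ℕ} {G : GameGraph n d} (τ : OPosStrat G) (w : Word) : Prop :=
  IsPlay G w ∧ ∀ k, (w k).1 ∈ G.oddN → w k = τ.choice (w k).1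

/-- A positional strategy for Even is winning: every arising play is won by Even. -/
def EWinningPos {n d : ℕ} {G : GameGraph n d} (τ : EPosStrat G) : Prop :=
  ∀ w, ArisesE τ w → LimsupEven w

/-- A positional strategy for Odd is winning: every arising play is won by Odd
(i.e. not won by Even). -/
def OWinningPos {n d : ℕ} {G : GameGraph n d} (τ : OPosStrat G) : Prop :=
  ∀ w, ArisesO τ w → ¬ LimsupEven w

/-- `PosEven_{n,d}`: plays arising from positional winning strategies for Even. -/
def PosEven (n d : ℕ) : Set Word :=
  {w | ∃ G : GameGraph n d, ∃ τ : EPosStrat G, EWinningPos τ ∧ ArisesE τ w}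

/-- `PosOdd_{n,d}`: plays arising from positional winning strategies for Odd. -/
def PosOdd (n d : ℕ) : Set Word :=
  {w | ∃ G : GameGraph n d, ∃ τ : OPosStrat G, OWinningPos τ ∧ ArisesO τ w}

/-- A nondeterministic automaton reading letters, with state space `Q`. -/
structure Automaton (Q : Type*) where
  init : Q
  trans : Set (Q × Letter × ℕ × Q)

/-- Transitions: (source state, letter, emitted priority, target state). -/
abbrev Trans (Q : Type*) : Type _ := Q × Letter × ℕ × Q

def tSrc {Q : Type*} (t : Trans Q) : Q := t.1
def tLetter {Q : Type*} (t : Trans Q) : Letter := t.2.1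
def tPrio {Q : Type*} (t : Trans Q) : ℕ := t.2.2.1
def tTgt {Q : Type*} (t : Trans Q) : Q := t.2.2.2

/-- `A` is a (total) nondeterministic parity automaton over `Σ_{n,d}` with
transition priorities in `{1,…,d'}`. -/
def IsParityAutomaton (n d d' : ℕ) {Q : Type*} (A : Automaton Q) : Prop :=
  (∀ t ∈ A.trans, InAlph n d (tLetter t) ∧ 1 ≤ tPrio t ∧ tPrio t ≤ d') ∧
  (∀ (s : Q) (e : Letter), InAlph n d e → ∃ p s', (s, e, p, s') ∈ A.trans)

/-- A run of the automaton: an infinite path of transitions starting at `init`. -/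
def IsRun {Q : Type*} (A : Automaton Q) (ρ : ℕ → Trans Q) : Prop :=
  tSrc (ρ 0) = A.init ∧ ∀ k, ρ k ∈ A.trans ∧ tTgt (ρ k) = tSrc (ρ (k + 1))

/-- The run `ρ` reads the word `w`. -/
def Reads {Q : Type*} (ρ : ℕ → Trans Q) (w : Word) : Prop := ∀ k, tLetter (ρ k) = w k

/-- A run is accepting: the largest priority labelling infinitely many
of its transitions is even. -/
def Accepting {Q : Type*} (ρ : ℕ → Trans Q) : Prop := MaxInfOftEven fun k => tPrio (ρ k)

/-- The language of the automaton. -/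
def Lang {Q : Type*} (A : Automaton Q) : Set Word :=
  {w | ∃ ρ, IsRun A ρ ∧ Reads ρ w ∧ Accepting ρ}

/-- A transition strategy for `A`, resolving nondeterminism based on the word read
so far, the current state, and the next letter. -/
structure TransStrat (n d : ℕ) {Q : Type*} (A : Automaton Q) where
  app : List Letter → Q → Letter → Trans Q
  valid : ∀ w s e, InAlph n d e →
    app w s e ∈ A.trans ∧ tSrc (app w s e) = s ∧ tLetter (app w s e) = e

/-- The state reached after reading the first `k` letters of `w` following `σ`. -/
def stateAt {n d : ℕ} {Q : Type*} (A : Automaton Q) (σ : TransStrat n d A) (w : Word) :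
    ℕ → Q
  | 0 => A.init
  | k + 1 => tTgt (σ.app ((List.range k).map w) (stateAt A σ w k) (w k))

/-- The run obtained by following the transition strategy `σ` while reading `w`. -/
def followRun {n d : ℕ} {Q : Type*} (A : Automaton Q) (σ : TransStrat n d A) (w : Word)
    (k : ℕ) : Trans Q :=
  σ.app ((List.range k).map w) (stateAt A σ w k) (w k)

/-- The transition strategy `σ` is winning for the set of words `L`. -/
def WinningFor {n d : ℕ} {Q : Type*} (A : Automaton Q) (σ : TransStrat n d A)
    (L : Set Word) : Prop :=
  ∀ w ∈ L, Accepting (followRun A σ w)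

/-- `A` is good for games: some transition strategy is winning for the whole `L(A)`. -/
def GFG (n d : ℕ) {Q : Type*} (A : Automaton Q) : Prop :=
  ∃ σ : TransStrat n d A, WinningFor A σ (Lang A)

/-- `A` is a parity-games separator. -/
def PGSeparator (n d : ℕ) {Q : Type*} (A : Automaton Q) : Prop :=
  (∀ w ∈ PosEven n d, w ∈ Lang A) ∧ ∀ w ∈ PosOdd n d, w ∉ Lang A

/-- `A` is a strong PG separator: additionally it rejects all of `LimsupOdd`. -/
def StrongPGSeparator (n d : ℕ) {Q : Type*} (A : Automaton Q) : Prop :=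
  PGSeparator n d A ∧ ∀ w : Word, LimsupOdd w → w ∉ Lang A

/-- `A` is suitable for parity games (SFPG). -/
def SFPG (n d : ℕ) {Q : Type*} (A : Automaton Q) : Prop :=
  PGSeparator n d A ∧
  ∀ (G : GameGraph n d) (τ : EPosStrat G), EWinningPos τ →
    ∃ σ : TransStrat n d A, WinningFor A σ {w | ArisesE τ w}

/-- A generic game with parity winning condition, over an arbitrary set of nodes. -/
structure PGame (V : Type*) where
  evenOwn : V → Prop
  start : V
  edges : Set (V × ℕ × V)

/-- A play of a generic game. -/
def PGame.IsPlay {V : Type*} (g : PGame V) (w : ℕ → V × ℕ × V) : Prop :=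
  (w 0).1 = g.start ∧ IsPathSeq g.edges w

/-- `IsFinPath E u l v`: the list of edges `l` is a finite path from `u` to `v`. -/
def IsFinPath {V : Type*} (E : Set (V × ℕ × V)) : V → List (V × ℕ × V) → V → Prop
  | u, [], v => u = v
  | u, e :: l, v => e ∈ E ∧ e.1 = u ∧ IsFinPath E e.2.2 l v

/-- Even has a winning strategy in the game `g`. -/
def EvenWins {V : Type*} (g : PGame V) : Prop :=
  ∃ str : List (V × ℕ × V) → V × ℕ × V,
    (∀ l v, IsFinPath g.edges g.start l v → g.evenOwn v →
      str l ∈ g.edges ∧ (str l).1 = v) ∧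
    ∀ w, g.IsPlay w → (∀ k, g.evenOwn ((w k).1) → w k = str ((List.range k).map w)) →
      MaxInfOftEven fun k => (w k).2.1

/-- Odd has a winning strategy in the game `g`. -/
def OddWins {V : Type*} (g : PGame V) : Prop :=
  ∃ str : List (V × ℕ × V) → V × ℕ × V,
    (∀ l v, IsFinPath g.edges g.start l v → ¬ g.evenOwn v →
      str l ∈ g.edges ∧ (str l).1 = v) ∧
    ∀ w, g.IsPlay w → (∀ k, ¬ g.evenOwn ((w k).1) → w k = str ((List.range k).map w)) →
      ¬ MaxInfOftEven fun k => (w k).2.1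

/-- Even has a strategy winning for the safety condition `safe` in the game `g`. -/
def EvenWinsSafety {V : Type*} (g : PGame V) (safe : V → Prop) : Prop :=
  ∃ str : List (V × ℕ × V) → V × ℕ × V,
    (∀ l v, IsFinPath g.edges g.start l v → g.evenOwn v →
      str l ∈ g.edges ∧ (str l).1 = v) ∧
    ∀ w, g.IsPlay w → (∀ k, g.evenOwn ((w k).1) → w k = str ((List.range k).map w)) →
      ∀ k, safe (w k).2.2

/-- A game graph viewed as a generic game. -/
def GameGraph.toPGame {n d : ℕ} (G : GameGraph n d) : PGame ℕ :=
  { evenOwn := fun v => v ∈ G.evenN, start := G.start, edges := G.edges }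

/-- The synchronized product `G × A`. -/
def prodGame {n d : ℕ} {Q : Type*} (G : GameGraph n d) (A : Automaton Q) :
    PGame ((ℕ ⊕ Letter) × Q) where
  evenOwn := fun x => match x.1 with
    | Sum.inl v => v ∈ G.evenN
    | Sum.inr _ => True
  start := (Sum.inl G.start, A.init)
  edges := {ed | (∃ e ∈ G.edges, ∃ s : Q, ed = ((Sum.inl e.1, s), 1, (Sum.inr e, s))) ∨
    (∃ t ∈ A.trans, tLetter t ∈ G.edges ∧
      ed = ((Sum.inr (tLetter t), tSrc t), tPrio t, (Sum.inl (tLetter t).2.2, tTgt t)))}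

/-- The number of registers: `rn(n) = 1 + ⌊log₂ n⌋`. -/
def rn (n : ℕ) : ℕ := 1 + Nat.log 2 n

/-- Update of a register state (bottom register first) by priority `p`:
the maximal prefix of registers smaller than `p` is replaced by `p`. -/
def update (p : ℕ) : List ℕ → List ℕ
  | [] => []
  | r :: l => if r < p then p :: update p l else r :: l

/-- The `k`-reset (registers numbered from 1, bottom first): the `k`-th register is
removed and a `1` is inserted at the bottom. -/
def resetReg (k : ℕ) (l : List ℕ) : List ℕ := 1 :: l.eraseIdx (k - 1)

/-- The value of register number `k` (registers numbered from 1, bottom first). -/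
def regVal (k : ℕ) (l : List ℕ) : ℕ := l.getD (k - 1) 0

/-- Lehtinen's register automaton `R_{n,d}`. -/
def Raut (n d : ℕ) : Automaton (List ℕ) where
  init := List.replicate (rn n) 1
  trans := {t | ∃ s e, InAlph n d e ∧
    (t = (s, e, 1, update (prio e) s) ∨
     ∃ k, 1 ≤ k ∧ k ≤ rn n ∧
       ((Even (regVal k (update (prio e) s)) ∧
           t = (s, e, 2 * k, resetReg k (update (prio e) s))) ∨
        (Odd (regVal k (update (prio e) s)) ∧
           t = (s, e, 2 * k + 1, resetReg k (update (prio e) s)))))}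

/-- States of the safety automaton `S_{n,d}`: `none` is the rejecting state `rej`;
otherwise a state of `R_{n,d}` together with a tuple of counters (bottom first:
`c_0` is the head). -/
abbrev SState : Type := Option (List ℕ × List ℕ)

/-- Counters `c_0,…,c_{k-1}` are reset to `c0`; the rest is kept. -/
def bumpKeep (c0 k : ℕ) (c : List ℕ) : List ℕ := List.replicate k c0 ++ c.drop k

/-- Counters `c_0,…,c_{k-1}` are reset to `c0`; counter `c_k` is decremented. -/
def bumpDec (c0 k : ℕ) (c : List ℕ) : List ℕ :=
  List.replicate k c0 ++ ((c.getD k 0 - 1) :: c.drop (k + 1))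

/-- The safety automaton `S_{n,d}`. -/
def Saut (n d : ℕ) : Automaton SState where
  init := some (List.replicate (rn n) 1, List.replicate (rn n + 1) n)
  trans := {t |
    (∃ e, InAlph n d e ∧ t = (none, e, 1, none)) ∨
    (∃ s c e k s', 1 ≤ k ∧ (s, e, 2 * k, s') ∈ (Raut n d).trans ∧
       t = (some (s, c), e, 2, some (s', bumpKeep n k c))) ∨
    (∃ s c e k s', (s, e, 2 * k + 1, s') ∈ (Raut n d).trans ∧
       ((1 < c.getD k 0 ∧ t = (some (s, c), e, 2, some (s', bumpDec n k c))) ∨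
        (c.getD k 0 = 1 ∧ t = (some (s, c), e, 1, none))))}

/-- `bad(ρ) ≤ B` for an infinite run `ρ`: every infix containing no transition of
priority above an odd `p` contains at most `B` transitions of priority `p`. -/
def badLE {Q : Type*} (ρ : ℕ → Trans Q) (B : ℕ) : Prop :=
  ∀ a b p, Odd p → (∀ i, a ≤ i → i < b → tPrio (ρ i) ≤ p) →
    ((Finset.Ico a b).filter fun i => tPrio (ρ i) = p).card ≤ B

/-- `bad(ρ) ≤ B` for a partial run of length `L` (possibly infinite). -/
def badLEPartial {Q : Type*} (ρ : ℕ → Trans Q) (L : ℕ∞) (B : ℕ) : Prop :=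
  ∀ (a b p : ℕ), Odd p → (b : ℕ∞) ≤ L → (∀ i, a ≤ i → i < b → tPrio (ρ i) ≤ p) →
    ((Finset.Ico a b).filter fun i => tPrio (ρ i) = p).card ≤ B

/-- The strategy subgraph `G_τ`: all outgoing edges of Odd's nodes, and only the
chosen edge from each of Even's nodes. -/
def GtauEdges {n d : ℕ} (G : GameGraph n d) (τ : EPosStrat G) : Set Letter :=
  {e | e ∈ G.edges ∧ (e.1 ∈ G.evenN → e = τ.choice e.1)}

/-- One step along an edge of `E`. -/
def StepRel (E : Set Letter) (u v : ℕ) : Prop := ∃ p, (u, p, v) ∈ E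

/-- Reachability along edges of `E`. -/
def Reach (E : Set Letter) : ℕ → ℕ → Prop := Relation.ReflTransGen (StepRel E)

/-- `V_τ`: the nodes of `G_τ` reachable from the starting node. -/
def Vtau {n d : ℕ} (G : GameGraph n d) (τ : EPosStrat G) : Set ℕ :=
  {v | Reach (GtauEdges G τ) G.start v}

/-- `G_{S,p}`: edges of `E` inside `S` of priority at most `p`. -/
def subEdges (E : Set Letter) (S : Set ℕ) (p : ℕ) : Set Letter :=
  {e | e ∈ E ∧ e.1 ∈ S ∧ e.2.2 ∈ S ∧ prio e ≤ p}

/-- `parts` lists the strongly connected components of the graph `(S, E)` in a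
topological order. -/
def IsSCCDecomp (E : Set Letter) (S : Set ℕ) (parts : List (Set ℕ)) : Prop :=
  (∀ P ∈ parts, P.Nonempty ∧ P ⊆ S) ∧
  (∀ v ∈ S, ∃ P ∈ parts, v ∈ P) ∧
  List.Pairwise Disjoint parts ∧
  (∀ P ∈ parts, ∀ u ∈ P, ∀ v ∈ S, ((Reach E u v ∧ Reach E v u) ↔ v ∈ P)) ∧
  (∀ (i j : ℕ) (hi : i < parts.length) (hj : j < parts.length), i < j →
    ∀ u ∈ parts.get ⟨j, hj⟩, ∀ v ∈ parts.get ⟨i, hi⟩, ¬ StepRel E u v)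

/-- The nodes of a tree given by the children function `ch` with root `(r, R)`. -/
inductive TreeNode (ch : ℕ → Set ℕ → List (Set ℕ)) (r : ℕ) (R : Set ℕ) :
    ℕ → Set ℕ → Prop where
  | root : TreeNode ch r R r R
  | child {k : ℕ} {S T : Set ℕ} : TreeNode ch r R (k + 1) S → T ∈ ch (k + 1) S →
      TreeNode ch r R k T

/-- `ch` describes a game tree of `G_τ`: the root is `(⌈d/2⌉, V_τ)`, and the children
of a node `(k+1, S)` are the SCCs of `G_{S,2(k+1)-1}` in topological order. -/
def IsGameTree {n d : ℕ} (G : GameGraph n d) (τ : EPosStrat G)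
    (ch : ℕ → Set ℕ → List (Set ℕ)) : Prop :=
  ∀ k S, TreeNode ch ((d + 1) / 2) (Vtau G τ) (k + 1) S →
    IsSCCDecomp (subEdges (GtauEdges G τ) S (2 * (k + 1) - 1)) S (ch (k + 1) S)

/-- `fstl ch l k S`: the leftmost descendant of the node `(k, S)` on level `l`
(for `l ≤ k`). -/
def fstl (ch : ℕ → Set ℕ → List (Set ℕ)) (l : ℕ) : ℕ → Set ℕ → Set ℕ
  | 0, S => S
  | k + 1, S => if l = k + 1 then S else fstl ch l k ((ch (k + 1) S).headD ∅)


/-! ### Auxiliary lemmas for Statement 13 -/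

section Aux13

lemma aux_length_update (p : ℕ) : ∀ l : List ℕ, (update p l).length = l.length
  | [] => rfl
  | r :: l => by
    simp only [update]
    split
    · simp [aux_length_update p l]
    · rfl

lemma aux_mem_update {p x : ℕ} : ∀ {l : List ℕ}, x ∈ update p l → x = p ∨ x ∈ l
  | [], h => by simp [update] at h
  | r :: l, h => by
    simp only [update] at h
    split at h
    · rcases List.mem_cons.mp h with h | h
      · exact Or.inl h
      · rcases aux_mem_update h with h | h
        · exact Or.inl h
        · exact Or.inr (List.mem_cons_of_mem _ h)
    · exact Or.inr h

lemma aux_sorted_update_aux (p : ℕ) : ∀ l : List ℕ, l.Pairwise (· ≤ ·) →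
    (update p l).Pairwise (· ≤ ·) ∧ ((∀ x ∈ update p l, p ≤ x) ∨ update p l = l)
  | [], _ => ⟨List.Pairwise.nil, Or.inr rfl⟩
  | r :: l, hs => by
    rw [List.pairwise_cons] at hs
    obtain ⟨hr, hl⟩ := hs
    by_cases h : r < p
    · obtain ⟨ih1, ih2⟩ := aux_sorted_update_aux p l hl
      simp only [update, if_pos h]
      rcases ih2 with h2 | h2
      · refine ⟨List.pairwise_cons.mpr ⟨h2, ih1⟩, Or.inl ?_⟩
        intro x hx
        rcases List.mem_cons.mp hx with rfl | hx
        · exact le_refl _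
        · exact h2 x hx
      · rw [h2]
        have hge : ∀ x ∈ l, p ≤ x := by
          cases l with
          | nil => simp
          | cons r' l' =>
            have hr' : ¬ r' < p := by
              intro hlt
              rw [show update p (r' :: l') = if r' < p then p :: update p l' else r' :: l'
                from rfl, if_pos hlt] at h2
              injection h2 with h21 _
              omega
            intro x hx
            rcases List.mem_cons.mp hx with rfl | hx
            · omega
            · have := (List.pairwise_cons.mp hl).1 x hx
              omega
        refine ⟨List.pairwise_cons.mpr ⟨hge, hl⟩, Or.inl ?_⟩
        intro x hx
        rcases List.mem_cons.mp hx with rfl | hx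
        · exact le_refl _
        · exact hge x hx
    · simp only [update, if_neg h]
      exact ⟨List.pairwise_cons.mpr ⟨hr, hl⟩, Or.inr trivial⟩

lemma aux_sorted_update (p : ℕ) (l : List ℕ) (h : l.Pairwise (· ≤ ·)) :
    (update p l).Pairwise (· ≤ ·) := (aux_sorted_update_aux p l h).1

lemma aux_getD_update (p : ℕ) : ∀ (l : List ℕ), l.Pairwise (· ≤ ·) → ∀ j, j < l.length →
    (update p l).getD j 0 = max (l.getD j 0) p
  | [], _, j, hj => by simp at hj
  | r :: l, hs, j, hj => by
    rw [List.pairwise_cons] at hs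
    by_cases h : r < p
    · simp only [update, if_pos h]
      cases j with
      | zero =>
        rw [List.getD_cons_zero, List.getD_cons_zero]
        omega
      | succ j =>
        rw [List.getD_cons_succ, List.getD_cons_succ]
        exact aux_getD_update p l hs.2 j (by simpa using hj)
    · simp only [update, if_neg h]
      cases j with
      | zero =>
        rw [List.getD_cons_zero]
        omega
      | succ j =>
        rw [List.getD_cons_succ]
        have hjl : j < l.length := by simpa using hj
        have hmem : l.getD j 0 ∈ l := by
          rw [List.getD_eq_getElem l 0 hjl]; exact List.getElem_mem hjl
        have := hs.1 _ hmem
        omega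

lemma aux_getD_eraseIdx_lt : ∀ (l : List ℕ) (i j : ℕ), j < i →
    (l.eraseIdx i).getD j 0 = l.getD j 0
  | [], _, _, _ => by simp
  | _ :: _, 0, j, h => by omega
  | a :: l, i + 1, 0, _ => by simp [List.eraseIdx_cons_succ]
  | a :: l, i + 1, j + 1, h => by
    rw [List.eraseIdx_cons_succ, List.getD_cons_succ, List.getD_cons_succ]
    exact aux_getD_eraseIdx_lt l i j (by omega)

lemma aux_getD_eraseIdx_ge : ∀ (l : List ℕ) (i j : ℕ), i < l.length → i ≤ j →
    (l.eraseIdx i).getD j 0 = l.getD (j + 1) 0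
  | [], i, j, h, _ => by simp at h
  | a :: l, 0, j, _, _ => by rw [List.eraseIdx_cons_zero, List.getD_cons_succ]
  | a :: l, i + 1, 0, _, h => by omega
  | a :: l, i + 1, j + 1, h1, h2 => by
    rw [List.eraseIdx_cons_succ, List.getD_cons_succ, List.getD_cons_succ]
    exact aux_getD_eraseIdx_ge l i j (by simpa using h1) (by omega)

lemma aux_getD_drop : ∀ (l : List ℕ) (a k : ℕ), (l.drop a).getD k 0 = l.getD (a + k) 0
  | _, 0, k => by simp
  | [], a + 1, k => by simp
  | x :: l, a + 1, k => by
    rw [List.drop_succ_cons, aux_getD_drop l a k,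
      show a + 1 + k = (a + k) + 1 from by omega, List.getD_cons_succ]

lemma aux_getD_replicate_append (x : ℕ) (m : ℕ) : ∀ (i : ℕ) (l : List ℕ), m ≤ i →
    (List.replicate m x ++ l).getD i 0 = l.getD (i - m) 0 := by
  induction m with
  | zero => intro i l _; simp
  | succ m ih =>
    intro i l h
    cases i with
    | zero => omega
    | succ i =>
      rw [List.replicate_succ, List.cons_append, List.getD_cons_succ, ih i l (by omega)]
      congr 1
      omega

lemma aux_getD_bumpKeep {n j' j : ℕ} (h : j' ≤ j) (c : List ℕ) :
    (bumpKeep n j' c).getD j 0 = c.getD j 0 := by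
  rw [bumpKeep, aux_getD_replicate_append n j' j _ h, aux_getD_drop]
  congr 1
  omega

lemma aux_getD_bumpDec_lt {n j' j : ℕ} (h : j' < j) (c : List ℕ) :
    (bumpDec n j' c).getD j 0 = c.getD j 0 := by
  rw [bumpDec, aux_getD_replicate_append n j' j _ (le_of_lt h),
    show j - j' = (j - j' - 1) + 1 from by omega, List.getD_cons_succ, aux_getD_drop]
  congr 1
  omega

lemma aux_getD_bumpDec_eq (n j : ℕ) (c : List ℕ) :
    (bumpDec n j c).getD j 0 = c.getD j 0 - 1 := by
  rw [bumpDec, aux_getD_replicate_append n j j _ (le_refl j), Nat.sub_self,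
    List.getD_cons_zero]

lemma aux_countP_update (p' p : ℕ) (hp : p' ≤ p) : ∀ l : List ℕ,
    (update p' l).countP (fun r => decide (p < r)) = l.countP (fun r => decide (p < r))
  | [] => rfl
  | r :: l => by
    simp only [update]
    split
    · rename_i h
      rw [List.countP_cons, List.countP_cons, aux_countP_update p' p hp l]
      have h1 : ¬ p < p' := by omega
      have h2 : ¬ p < r := by omega
      simp [h1, h2]
    · rfl

lemma aux_countP_eraseIdx (p : ℕ) : ∀ (l : List ℕ) (i : ℕ), i < l.length →
    l.countP (fun r => decide (p < r)) =
      (l.eraseIdx i).countP (fun r => decide (p < r)) +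
        (if p < l.getD i 0 then 1 else 0)
  | [], i, h => by simp at h
  | a :: l, 0, _ => by
    rw [List.eraseIdx_cons_zero, List.countP_cons, List.getD_cons_zero]
    by_cases h : p < a <;> simp [h]
  | a :: l, i + 1, h => by
    rw [List.eraseIdx_cons_succ, List.countP_cons, List.countP_cons,
      List.getD_cons_succ, aux_countP_eraseIdx p l i (by simpa using h)]
    by_cases h1 : p < a <;> by_cases h2 : p < l.getD i 0 <;> simp [h1, h2] <;> omega

lemma aux_sorted_replicate (m x : ℕ) : (List.replicate m x).Pairwise (· ≤ ·) := by
  induction m with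
  | zero => exact List.Pairwise.nil
  | succ m ih =>
    rw [List.replicate_succ, List.pairwise_cons]
    refine ⟨fun b hb => ?_, ih⟩
    rw [List.eq_of_mem_replicate hb]

lemma aux_exists_max_infOft : ∀ (B : ℕ) (f : ℕ → ℕ), (∀ k, f k ≤ B) →
    ∃ p, InfOft f p ∧ ∀ q, InfOft f q → q ≤ p := by
  intro B
  induction B with
  | zero =>
    intro f hf
    refine ⟨0, fun N => ⟨N, le_refl N, Nat.le_zero.mp (hf N)⟩, fun q hq => ?_⟩
    obtain ⟨k, _, hk⟩ := hq 0
    have := hf k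
    omega
  | succ B ih =>
    intro f hf
    by_cases hB : InfOft f (B + 1)
    · refine ⟨B + 1, hB, fun q hq => ?_⟩
      obtain ⟨k, _, hk⟩ := hq 0
      have := hf k
      omega
    · rw [InfOft] at hB
      push_neg at hB
      obtain ⟨N1, hN1⟩ := hB
      obtain ⟨p, hp1, hp2⟩ := ih (fun k => f (N1 + k)) (fun k => by
        show f (N1 + k) ≤ B
        have h1 := hf (N1 + k)
        have h2 := hN1 (N1 + k) (Nat.le_add_right _ _)
        omega)
      refine ⟨p, ?_, ?_⟩
      · intro N
        obtain ⟨k, hk1, hk2⟩ := hp1 N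
        exact ⟨N1 + k, by omega, hk2⟩
      · intro v hv
        apply hp2
        intro N
        obtain ⟨k, hk1, hk2⟩ := hv (N1 + N)
        refine ⟨k - N1, by omega, ?_⟩
        show f (N1 + (k - N1)) = v
        rw [show N1 + (k - N1) = k from by omega]
        exact hk2

lemma aux_avoid_above (f : ℕ → ℕ) (p : ℕ) (hmax : ∀ q, InfOft f q → q ≤ p) :
    ∀ m, ∃ N, ∀ k, N ≤ k → ¬ (p < f k ∧ f k ≤ p + m) := by
  intro m
  induction m with
  | zero => exact ⟨0, fun k _ h => by omega⟩
  | succ m ih =>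
    obtain ⟨N1, hN1⟩ := ih
    have hni : ¬ InfOft f (p + m + 1) := fun h => by have := hmax _ h; omega
    rw [InfOft] at hni
    push_neg at hni
    obtain ⟨N2, hN2⟩ := hni
    refine ⟨max N1 N2, fun k hk h => ?_⟩
    have h1 := hN1 k (le_trans (le_max_left _ _) hk)
    have h2 := hN2 k (le_trans (le_max_right _ _) hk)
    omega

lemma aux_eventually_le (f : ℕ → ℕ) (B p : ℕ) (hf : ∀ k, f k ≤ B)
    (hmax : ∀ q, InfOft f q → q ≤ p) : ∃ N, ∀ k, N ≤ k → f k ≤ p := by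
  obtain ⟨N, hN⟩ := aux_avoid_above f p hmax (B - p)
  refine ⟨N, fun k hk => ?_⟩
  have h1 := hN k hk
  have h2 := hf k
  omega

lemma aux_no_inf_strict_decrease (g : ℕ → ℕ) (N : ℕ)
    (hmono : ∀ t, N ≤ t → g (t + 1) ≤ g t)
    (hstrict : ∀ T, ∃ t, T ≤ t ∧ N ≤ t ∧ g (t + 1) < g t) : False := by
  have hle : ∀ a b, N ≤ a → a ≤ b → g b ≤ g a := by
    intro a b ha hab
    induction b, hab using Nat.le_induction with
    | base => exact le_refl _
    | succ b hab ih => exact le_trans (hmono b (by omega)) ih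
  have key : ∀ m, ∃ t, N ≤ t ∧ g t + m ≤ g N := by
    intro m
    induction m with
    | zero => exact ⟨N, le_refl N, by omega⟩
    | succ m ih =>
      obtain ⟨t, ht, hgt⟩ := ih
      obtain ⟨t', ht1, ht2, ht3⟩ := hstrict t
      have := hle t t' ht ht1
      exact ⟨t' + 1, by omega, by omega⟩
  obtain ⟨t, ht, h⟩ := key (g N + 1)
  omega

lemma aux_Raut_trans_struct {n d : ℕ} {s s' : List ℕ} {e : Letter} {qv : ℕ}
    (h : (s, e, qv, s') ∈ (Raut n d).trans) :
    (qv = 1 ∧ s' = update (prio e) s) ∨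
    ∃ j, 1 ≤ j ∧ j ≤ rn n ∧ s' = resetReg j (update (prio e) s) ∧
      ((qv = 2 * j ∧ Even ((update (prio e) s).getD (j - 1) 0)) ∨ qv = 2 * j + 1) := by
  simp only [Raut, Set.mem_setOf_eq] at h
  obtain ⟨s₀, e₀, _, h⟩ := h
  rcases h with h | ⟨j, hj1, hj2, h⟩
  · simp only [Prod.mk.injEq] at h
    obtain ⟨h1, h2, h3, h4⟩ := h
    subst h1; subst h2
    exact Or.inl ⟨h3, h4⟩
  · rcases h with ⟨hev, h⟩ | ⟨hod, h⟩ <;>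
    · simp only [Prod.mk.injEq] at h
      obtain ⟨h1, h2, h3, h4⟩ := h
      subst h1; subst h2
      first
      | exact Or.inr ⟨j, hj1, hj2, h4, Or.inl ⟨h3, hev⟩⟩
      | exact Or.inr ⟨j, hj1, hj2, h4, Or.inr h3⟩

end Aux13

/-- `S_{n,d}` rejects all words of `LimsupOdd_{n,d}`: every run
reading such a word eventually reaches the rejecting state `rej` (= `none`). -/
theorem Saut_rejects_limsupOdd (n d : ℕ) (hn : 1 ≤ n) (hd : 0 < d) (hde : Even d)
    (w : Word) (hw : ∀ k, InAlph n d (w k)) (hodd : LimsupOdd w)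
    (ρ : ℕ → Trans SState) (hρ : IsRun (Saut n d) ρ) (hr : Reads ρ w) :
    ∃ k, tTgt (ρ k) = none := by
  by_contra hcon
  push_neg at hcon
  classical
  have hsrc : ∀ k, tSrc (ρ k) ≠ none := by
    intro k
    cases k with
    | zero => rw [hρ.1]; simp [Saut]
    | succ k => rw [← (hρ.2 k).2]; exact hcon k
  have hst' : ∀ k, ∃ x : List ℕ × List ℕ, tSrc (ρ k) = some x := by
    intro k
    cases h : tSrc (ρ k) with
    | none => exact absurd h (hsrc k)
    | some x => exact ⟨x, rfl⟩
  choose st hst using hst'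
  have hst0 : st 0 = (List.replicate (rn n) 1, List.replicate (rn n + 1) n) := by
    have h := (hst 0).symm.trans hρ.1
    simp only [Saut] at h
    exact (Option.some_inj.mp h)
  -- structure of each step
  have hstep : ∀ m, ∃ qv, ((st m).1, w m, qv, (st (m + 1)).1) ∈ (Raut n d).trans ∧
      ((∃ j, 1 ≤ j ∧ qv = 2 * j ∧ (st (m + 1)).2 = bumpKeep n j (st m).2) ∨
       (∃ j, qv = 2 * j + 1 ∧ 1 < (st m).2.getD j 0 ∧
         (st (m + 1)).2 = bumpDec n j (st m).2)) := by
    intro m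
    have hmem := (hρ.2 m).1
    have htgt : tTgt (ρ m) = some (st (m + 1)) := by rw [(hρ.2 m).2]; exact hst (m + 1)
    have hsm := hst m
    have hlm := hr m
    simp only [Saut, Set.mem_setOf_eq] at hmem
    rcases hmem with ⟨e, _, heq⟩ | ⟨s, c, e, j, s', hj, hRt, heq⟩ |
      ⟨s, c, e, j, s', hRt, hcase⟩
    · rw [heq] at hsm
      simp [tSrc] at hsm
    · rw [heq] at hsm htgt hlm
      simp only [tSrc, tLetter, tTgt, Option.some_inj] at hsm htgt hlm
      refine ⟨2 * j, ?_, Or.inl ⟨j, hj, rfl, ?_⟩⟩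
      · rw [← hsm, ← htgt, ← hlm]
        exact hRt
      · rw [← hsm, ← htgt]
    · rcases hcase with ⟨hc1, heq⟩ | ⟨hc1, heq⟩
      · rw [heq] at hsm htgt hlm
        simp only [tSrc, tLetter, tTgt, Option.some_inj] at hsm htgt hlm
        refine ⟨2 * j + 1, ?_, Or.inr ⟨j, rfl, ?_, ?_⟩⟩
        · rw [← hsm, ← htgt, ← hlm]
          exact hRt
        · rw [← hsm]
          exact hc1
        · rw [← hsm, ← htgt]
      · rw [heq] at htgt
        simp [tTgt] at htgt
  choose q hq using hstep
  -- basic invariants of the register component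
  have hrn1 : 1 ≤ rn n := Nat.le_add_right 1 _
  have hinv : ∀ m, (st m).1.length = rn n ∧ (st m).1.Pairwise (· ≤ ·) ∧
      ∀ x ∈ (st m).1, 1 ≤ x := by
    intro m
    induction m with
    | zero =>
      rw [hst0]
      refine ⟨by simp, aux_sorted_replicate _ _, fun x hx => ?_⟩
      rw [List.eq_of_mem_replicate hx]
    | succ m ih =>
      obtain ⟨ihlen, ihsort, ihpos⟩ := ih
      have hp1 : 1 ≤ prio (w m) := (hw m).2.2.1
      rcases aux_Raut_trans_struct (hq m).1 with ⟨_, hs'⟩ | ⟨j, hj1, hj2, hs', _⟩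
      · rw [hs']
        refine ⟨by rw [aux_length_update, ihlen], aux_sorted_update _ _ ihsort,
          fun x hx => ?_⟩
        rcases aux_mem_update hx with rfl | hx
        · exact hp1
        · exact ihpos x hx
      · rw [hs', resetReg]
        have hidx : j - 1 < (update (prio (w m)) (st m).1).length := by
          rw [aux_length_update, ihlen]; omega
        have herase : ((update (prio (w m)) (st m).1).eraseIdx (j - 1)).Sublist
            (update (prio (w m)) (st m).1) := List.eraseIdx_sublist _ _
        have hupos : ∀ x ∈ update (prio (w m)) (st m).1, 1 ≤ x := by
          intro x hx
          rcases aux_mem_update hx with rfl | hx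
          · exact hp1
          · exact ihpos x hx
        refine ⟨?_, ?_, ?_⟩
        · rw [List.length_cons, List.length_eraseIdx, if_pos hidx,
            aux_length_update, ihlen]
          omega
        · rw [List.pairwise_cons]
          exact ⟨fun b hb => hupos b (herase.mem hb),
            (aux_sorted_update _ _ ihsort).sublist herase⟩
        · intro x hx
          rcases List.mem_cons.mp hx with rfl | hx
          · exact le_refl 1
          · exact hupos x (herase.mem hx)
  -- bounds on transition priorities
  have hq1 : ∀ m, 1 ≤ q m := by
    intro m
    rcases aux_Raut_trans_struct (hq m).1 with ⟨h1, _⟩ | ⟨j, hj1, _, _, hpar⟩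
    · omega
    · rcases hpar with ⟨h1, _⟩ | h1 <;> omega
  have hqB : ∀ m, q m ≤ 2 * rn n + 1 := by
    intro m
    rcases aux_Raut_trans_struct (hq m).1 with ⟨h1, _⟩ | ⟨j, hj1, hj2, _, hpar⟩
    · omega
    · rcases hpar with ⟨h1, _⟩ | h1 <;> omega
  obtain ⟨Q, hQinf, hQmax⟩ := aux_exists_max_infOft (2 * rn n + 1) q hqB
  obtain ⟨N0, hN0⟩ := aux_eventually_le q (2 * rn n + 1) Q hqB hQmax
  rcases Nat.even_or_odd Q with hQe | hQo
  · -- even case: max infinitely-often register priority is an even reset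
    obtain ⟨k, hk⟩ := hQe
    have hQ1 : 1 ≤ Q := by
      obtain ⟨m0, _, hm0⟩ := hQinf 0
      have := hq1 m0
      omega
    have hk1 : 1 ≤ k := by omega
    have hkrn : k ≤ rn n := by
      obtain ⟨m0, _, hm0⟩ := hQinf 0
      rcases aux_Raut_trans_struct (hq m0).1 with ⟨h1, _⟩ | ⟨j, hj1, hj2, _, hpar⟩
      · omega
      · rcases hpar with ⟨h1, _⟩ | h1 <;> omega
    obtain ⟨p, hpo, hpinf, hpmax⟩ := hodd
    have hpbound : ∀ m, prio (w m) ≤ d := fun m => (hw m).2.2.2.1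
    obtain ⟨N1, hN1⟩ := aux_eventually_le (fun m => prio (w m)) d p hpbound hpmax
    have hp1 : 1 ≤ p := by
      obtain ⟨a, ha⟩ := hpo
      omega
    -- value of register k after update
    have hu : ∀ m, (update (prio (w m)) (st m).1).getD (k - 1) 0 =
        max ((st m).1.getD (k - 1) 0) (prio (w m)) := by
      intro m
      exact aux_getD_update _ _ (hinv m).2.1 _ (by rw [(hinv m).1]; omega)
    -- register k is preserved through non-k-reset steps
    have hstepreg : ∀ m, N0 ≤ m → q m ≠ 2 * k →
        (st (m + 1)).1.getD (k - 1) 0 =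
          (update (prio (w m)) (st m).1).getD (k - 1) 0 := by
      intro m hm hne
      rcases aux_Raut_trans_struct (hq m).1 with ⟨_, hs'⟩ | ⟨j, hj1, hj2, hs', hpar⟩
      · rw [hs']
      · have hqle : q m ≤ Q := hN0 m hm
        have hjk : j < k := by
          rcases hpar with ⟨h1, _⟩ | h1 <;> omega
        rw [hs', resetReg, show k - 1 = (k - 2) + 1 from by omega, List.getD_cons_succ,
          aux_getD_eraseIdx_ge _ (j - 1) (k - 2)
            (by rw [aux_length_update, (hinv m).1]; omega) (by omega)]
    -- k-reset steps
    have hreset : ∀ m, q m = 2 * k →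
        (st (m + 1)).1 = resetReg k (update (prio (w m)) (st m).1) ∧
          Even ((update (prio (w m)) (st m).1).getD (k - 1) 0) := by
      intro m hm
      rcases aux_Raut_trans_struct (hq m).1 with ⟨h1, _⟩ | ⟨j, hj1, hj2, hs', hpar⟩
      · omega
      · rcases hpar with ⟨h1, hev⟩ | h1
        · have : j = k := by omega
          subst this
          exact ⟨hs', hev⟩
        · omega
    -- infinitely many k-resets with large even value
    have hbig : ∀ T, ∃ m, T ≤ m ∧ N1 ≤ m ∧ q m = 2 * k ∧
        p < (update (prio (w m)) (st m).1).getD (k - 1) 0 := by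
      intro T
      obtain ⟨i, hi1, hi2⟩ := hpinf (max (max T N0) N1)
      have hex : ∃ m, i ≤ m ∧ q m = 2 * k := by
        obtain ⟨m, hm1, hm2⟩ := hQinf i
        exact ⟨m, hm1, by omega⟩
      have ht := Nat.find_spec hex
      have htmin : ∀ m, m < Nat.find hex → ¬(i ≤ m ∧ q m = 2 * k) :=
        fun m hm => Nat.find_min hex hm
      set t := Nat.find hex with hts
      have hmon : ∀ s, i < s → s ≤ t → p ≤ (st s).1.getD (k - 1) 0 := by
        intro s
        induction s with
        | zero => intro h; omega
        | succ s ih =>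
          intro hs1 hs2
          have hsi : i ≤ s := by omega
          have hst' : s < t := by omega
          have hnq : q s ≠ 2 * k := fun h => htmin s hst' ⟨hsi, h⟩
          have hsN0 : N0 ≤ s := by omega
          rw [hstepreg s hsN0 hnq, hu s]
          rcases eq_or_lt_of_le hsi with heq | hlt
          · rw [← heq]
            have hi2' : prio (w i) = p := hi2
            exact le_trans (le_of_eq hi2'.symm) (le_max_right _ _)
          · exact le_trans (ih hlt (by omega)) (le_max_left _ _)
      refine ⟨t, by omega, by omega, ht.2, ?_⟩
      have hev := (hreset t ht.2).2
      have hup : p ≤ (update (prio (w t)) (st t).1).getD (k - 1) 0 := by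
        rw [hu t]
        rcases eq_or_lt_of_le ht.1 with heq | hlt
        · rw [← heq]
          have hi2' : prio (w i) = p := hi2
          exact le_trans (le_of_eq hi2'.symm) (le_max_right _ _)
        · exact le_trans (hmon t hlt (le_refl t)) (le_max_left _ _)
      obtain ⟨a, ha⟩ := hpo
      obtain ⟨b, hb⟩ := hev
      omega
    -- the count of registers above p decreases
    have hcu : ∀ m, N1 ≤ m →
        (update (prio (w m)) (st m).1).countP (fun r => decide (p < r)) =
          (st m).1.countP (fun r => decide (p < r)) :=
      fun m hm => aux_countP_update _ _ (hN1 m hm) _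
    have hcmono : ∀ m, N1 ≤ m →
        (st (m + 1)).1.countP (fun r => decide (p < r)) ≤
          (st m).1.countP (fun r => decide (p < r)) := by
      intro m hm
      rcases aux_Raut_trans_struct (hq m).1 with ⟨_, hs'⟩ | ⟨j, hj1, hj2, hs', _⟩
      · rw [hs', hcu m hm]
      · rw [hs', resetReg, List.countP_cons]
        have hidx : j - 1 < (update (prio (w m)) (st m).1).length := by
          rw [aux_length_update, (hinv m).1]; omega
        have hce := aux_countP_eraseIdx p (update (prio (w m)) (st m).1) (j - 1) hidx
        rw [hcu m hm] at hce
        have h1 : ¬ (p < 1) := by omega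
        rw [decide_eq_false h1, if_neg (by simp)]
        by_cases hc : p < (update (prio (w m)) (st m).1).getD (j - 1) 0 <;>
          simp [hc] at hce <;> omega
    have hcstrict : ∀ T, ∃ m, T ≤ m ∧ N1 ≤ m ∧
        (st (m + 1)).1.countP (fun r => decide (p < r)) <
          (st m).1.countP (fun r => decide (p < r)) := by
      intro T
      obtain ⟨m, hm1, hmN1, hq2k, hbigv⟩ := hbig T
      refine ⟨m, hm1, hmN1, ?_⟩
      have hs' := (hreset m hq2k).1
      rw [hs', resetReg, List.countP_cons]
      have hidx : k - 1 < (update (prio (w m)) (st m).1).length := by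
        rw [aux_length_update, (hinv m).1]; omega
      have hce := aux_countP_eraseIdx p (update (prio (w m)) (st m).1) (k - 1) hidx
      rw [hcu m hmN1] at hce
      have h1 : ¬ (p < 1) := by omega
      rw [decide_eq_false h1, if_neg (by simp)]
      rw [if_pos hbigv] at hce
      omega
    exact aux_no_inf_strict_decrease
      (fun m => (st m).1.countP (fun r => decide (p < r))) N1 hcmono hcstrict
  · -- odd case: counter at level j decreases forever
    obtain ⟨j, hj⟩ := hQo
    have hmono : ∀ m, N0 ≤ m → (st (m + 1)).2.getD j 0 ≤ (st m).2.getD j 0 := by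
      intro m hm
      have hqle : q m ≤ Q := hN0 m hm
      rcases (hq m).2 with ⟨j', hj'1, hqe, hC⟩ | ⟨j', hqe, hgt, hC⟩
      · have hj' : j' ≤ j := by omega
        rw [hC, aux_getD_bumpKeep hj']
      · have hj' : j' ≤ j := by omega
        rcases eq_or_lt_of_le hj' with heq | hlt
        · subst heq
          rw [hC, aux_getD_bumpDec_eq]
          omega
        · rw [hC, aux_getD_bumpDec_lt hlt]
    have hstrict : ∀ T, ∃ m, T ≤ m ∧ N0 ≤ m ∧
        (st (m + 1)).2.getD j 0 < (st m).2.getD j 0 := by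
      intro T
      obtain ⟨m, hm1, hm2⟩ := hQinf (max T N0)
      refine ⟨m, by omega, by omega, ?_⟩
      rcases (hq m).2 with ⟨j', hj'1, hqe, hC⟩ | ⟨j', hqe, hgt, hC⟩
      · omega
      · have : j' = j := by omega
        subst this
        rw [hC, aux_getD_bumpDec_eq]
        omega
    exact aux_no_inf_strict_decrease (fun m => (st m).2.getD j 0) N0 hmono hstrict

end PGSep
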